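/- For every integer m ≥ 1, every real number σ, and all complex numbers x, y, the following identity holds: (−1)^m · m! · L_m^{(1)}(|x+y|²; σ) · (x+y) = Σ_{j₁=0}^{m+1} Σ_{j₂=0}^{m} C(m+1, j₁) · C(m, j₂) · P^{m,σ}_{j₁,j₂}(y) · x^{j₁} · conj(x)^{j₂}, where P^{m,σ}_{j₁,j₂}(y) = (−1)^{m−j₂} · (m−j₂)! · L^{(j₂−j₁+1)}_{m−j₂}(|y|²; σ) · y^{j₂−j₁+1} when j₂ + 1 ≥ j₁, and P^{m,σ}_{j₁,j₂}(y) = (−1)^{m+1−j₁} · (m+1−j₁)! · L^{(j₁−j₂−1)}_{m+1−j₁}(|y|²; σ) · conj(y)^{j₁−j₂−1} when j₂ + 1 < j₁. -/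

import Mathlib

open Finset

/-- Scaled generalized Laguerre polynomial
`L_k^{(ℓ)}(x; σ) = ∑_{i=0}^{k} (−1)^i C(k+ℓ, k−i) σ^{k−i} x^i / i!`. -/
noncomputable def scaledLaguerre (k l : ℕ) (σ : ℝ) (x : ℝ) : ℝ :=
  ∑ i ∈ Finset.range (k + 1),
    (-1) ^ i * ((k + l).choose (k - i)) * σ ^ (k - i) * x ^ i / (i.factorial)

/-- The coefficient `P^{m,σ}_{j₁,j₂}(y)` from Lemma 3.1. -/
noncomputable def Pcoef (m : ℕ) (σ : ℝ) (j₁ j₂ : ℕ) (y : ℂ) : ℂ :=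
  if j₁ ≤ j₂ + 1 then
    (-1 : ℂ) ^ (m - j₂) * ((m - j₂).factorial : ℂ) *
      ((scaledLaguerre (m - j₂) (j₂ + 1 - j₁) σ (‖y‖ ^ 2) : ℝ) : ℂ) *
      y ^ (j₂ + 1 - j₁)
  else
    (-1 : ℂ) ^ (m + 1 - j₁) * ((m + 1 - j₁).factorial : ℂ) *
      ((scaledLaguerre (m + 1 - j₁) (j₁ - j₂ - 1) σ (‖y‖ ^ 2) : ℝ) : ℂ) *
      (starRingEnd ℂ y) ^ (j₁ - j₂ - 1)

/-- Complex Hermite polynomial term. -/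
noncomputable def Hterm (p q : ℕ) (σ : ℝ) (z : ℂ) (k : ℕ) : ℂ :=
  (-1 : ℂ) ^ k * (k.factorial : ℂ) * (p.choose k : ℂ) * (q.choose k : ℂ) * (σ : ℂ) ^ k *
    z ^ (p - k) * (starRingEnd ℂ z) ^ (q - k)

/-- Complex Hermite polynomial `H_{p,q}(z; σ)`. -/
noncomputable def Hpq (p q : ℕ) (σ : ℝ) (z : ℂ) : ℂ :=
  ∑ k ∈ Finset.range (q + 1), Hterm p q σ z k

lemma Hext (p q : ℕ) (σ : ℝ) (z : ℂ) (N : ℕ) (h : q + 1 ≤ N) :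
    Hpq p q σ z = ∑ k ∈ Finset.range N, Hterm p q σ z k := by
  refine Finset.sum_subset (Finset.range_subset_range.2 h) ?_
  intro k _ hk
  simp only [Finset.mem_range, not_lt] at hk
  have : q.choose k = 0 := Nat.choose_eq_zero_of_lt (by omega)
  simp [Hterm, this]

lemma Hconj (p q : ℕ) (σ : ℝ) (z : ℂ) :
    Hpq p q σ z = starRingEnd ℂ (Hpq q p σ z) := by
  rw [Hext p q σ z (p + q + 1) (by omega), Hext q p σ z (p + q + 1) (by omega), map_sum]
  refine Finset.sum_congr rfl fun k _ => ?_
  simp only [Hterm, map_mul, map_pow, map_neg, map_one, Complex.conj_conj,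
    Complex.conj_ofReal, map_natCast]
  ring

lemma HpqLag (q l : ℕ) (σ : ℝ) (z : ℂ) :
    Hpq (q + l) q σ z =
      (-1 : ℂ) ^ q * (q.factorial : ℂ) *
        ((scaledLaguerre q l σ (‖z‖ ^ 2) : ℝ) : ℂ) * z ^ l := by
  have habs : ((‖z‖ : ℝ) : ℂ) ^ 2 = z * starRingEnd ℂ z := by
    rw [← Complex.ofReal_pow, Complex.sq_norm, ← Complex.mul_conj]
  unfold Hpq scaledLaguerre
  push_cast
  rw [Finset.mul_sum, Finset.sum_mul]
  rw [← Finset.sum_range_reflect]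
  refine Finset.sum_congr rfl fun i hi => ?_
  simp only [Finset.mem_range] at hi
  have hiq : i ≤ q := by omega
  have h0 : q + 1 - 1 - i = q - i := by omega
  rw [h0]
  unfold Hterm
  have h1 : q - (q - i) = i := Nat.sub_sub_self hiq
  have h2 : q + l - (q - i) = l + i := by omega
  rw [h1, h2]
  have h3 : ((-1 : ℂ)) ^ (q - i) = (-1) ^ q * (-1) ^ i := by
    have hq : ((-1 : ℂ)) ^ q = (-1) ^ (q - i) * (-1) ^ i := by
      rw [← pow_add]; congr 1; omega
    rw [hq, mul_assoc, ← pow_add, ← two_mul, pow_mul]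
    simp
  have h4 : (q.choose (q - i) : ℂ) * ((q - i).factorial : ℂ) * (i.factorial : ℂ)
      = (q.factorial : ℂ) := by
    have := Nat.choose_mul_factorial_mul_factorial (Nat.sub_le q i)
    rw [h1] at this
    exact_mod_cast this
  have hfac : (i.factorial : ℂ) ≠ 0 := by
    exact_mod_cast Nat.factorial_ne_zero i
  rw [h3, habs]
  field_simp
  rw [Nat.choose_symm hiq] at h4
  rw [Nat.choose_symm hiq]
  linear_combination ((q + l).choose (q - i) : ℂ)
    * (σ : ℂ) ^ (q - i) * z ^ (l + i) * (starRingEnd ℂ z) ^ i * h4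

lemma trinom (p k j : ℕ) : p.choose k * (p - k).choose j = p.choose j * (p - j).choose k := by
  rcases le_or_gt (k + j) p with h | h
  · have h1 := Nat.choose_mul (n := p) (show j ≤ k + j by omega)
    have h2 := Nat.choose_mul (n := p) (show k ≤ k + j by omega)
    rw [Nat.add_sub_cancel] at h1
    rw [Nat.add_sub_cancel_left] at h2
    have h3 : (k + j).choose j = (k + j).choose k := by
      rw [← Nat.choose_symm (show j ≤ k + j by omega), Nat.add_sub_cancel]
    rw [← h1, ← h2, h3]
  · rcases le_or_gt k p with hk | hk
    · rcases le_or_gt j p with hj | hj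
      · rw [Nat.choose_eq_zero_of_lt (show p - k < j by omega),
          Nat.choose_eq_zero_of_lt (show p - j < k by omega)]
        simp
      · rw [Nat.choose_eq_zero_of_lt hj, Nat.choose_eq_zero_of_lt (show p - k < j by omega)]
        simp
    · rw [Nat.choose_eq_zero_of_lt hk, Nat.choose_eq_zero_of_lt (show p - j < k by omega)]
      simp

lemma Hbinom (p q : ℕ) (σ : ℝ) (x y : ℂ) :
    Hpq p q σ (x + y) =
      ∑ j₁ ∈ Finset.range (p + 1), ∑ j₂ ∈ Finset.range (q + 1),
        (p.choose j₁ : ℂ) * (q.choose j₂ : ℂ) * Hpq (p - j₁) (q - j₂) σ y *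
          x ^ j₁ * (starRingEnd ℂ x) ^ j₂ := by
  have key : ∀ k j₁ j₂ : ℕ,
      (-1 : ℂ) ^ k * (k.factorial : ℂ) * (p.choose k : ℂ) * (q.choose k : ℂ) * (σ : ℂ) ^ k *
        ((p - k).choose j₁ : ℂ) * ((q - k).choose j₂ : ℂ) *
        x ^ j₁ * y ^ (p - k - j₁) * (starRingEnd ℂ x) ^ j₂ * (starRingEnd ℂ y) ^ (q - k - j₂)
      = (p.choose j₁ : ℂ) * (q.choose j₂ : ℂ) *
        ((-1 : ℂ) ^ k * (k.factorial : ℂ) * ((p - j₁).choose k : ℂ) * ((q - j₂).choose k : ℂ) *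
          (σ : ℂ) ^ k * y ^ (p - j₁ - k) * (starRingEnd ℂ y) ^ (q - j₂ - k)) *
        x ^ j₁ * (starRingEnd ℂ x) ^ j₂ := by
    intro k j₁ j₂
    have e1 : p - k - j₁ = p - j₁ - k := by omega
    have e2 : q - k - j₂ = q - j₂ - k := by omega
    have c1 : (p.choose k : ℂ) * ((p - k).choose j₁ : ℂ)
        = (p.choose j₁ : ℂ) * ((p - j₁).choose k : ℂ) := by exact_mod_cast trinom p k j₁
    have c2 : (q.choose k : ℂ) * ((q - k).choose j₂ : ℂ)
        = (q.choose j₂ : ℂ) * ((q - j₂).choose k : ℂ) := by exact_mod_cast trinom q k j₂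
    rw [e1, e2]
    linear_combination ((-1 : ℂ)) ^ k * (k.factorial : ℂ) * (σ : ℂ) ^ k * x ^ j₁ *
        y ^ (p - j₁ - k) * (starRingEnd ℂ x) ^ j₂ * (starRingEnd ℂ y) ^ (q - j₂ - k) *
        ((q.choose k : ℂ) * ((q - k).choose j₂ : ℂ) * c1 + (p.choose j₁ : ℂ) *
          ((p - j₁).choose k : ℂ) * c2)
  calc Hpq p q σ (x + y)
      = ∑ k ∈ Finset.range (q + 1), ∑ j₁ ∈ Finset.range (p + 1), ∑ j₂ ∈ Finset.range (q + 1),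
          (-1 : ℂ) ^ k * (k.factorial : ℂ) * (p.choose k : ℂ) * (q.choose k : ℂ) * (σ : ℂ) ^ k *
          ((p - k).choose j₁ : ℂ) * ((q - k).choose j₂ : ℂ) *
          x ^ j₁ * y ^ (p - k - j₁) * (starRingEnd ℂ x) ^ j₂ *
          (starRingEnd ℂ y) ^ (q - k - j₂) := by
        unfold Hpq
        refine Finset.sum_congr rfl fun k hk => ?_
        unfold Hterm
        have hx1 : (x + y) ^ (p - k) = ∑ j₁ ∈ Finset.range (p + 1),
            (((p - k).choose j₁ : ℂ)) * x ^ j₁ * y ^ (p - k - j₁) := by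
          rw [add_pow]
          rw [Finset.sum_subset (Finset.range_subset_range.2 (show p - k + 1 ≤ p + 1 by omega))]
          · exact Finset.sum_congr rfl fun j _ => by ring
          · intro j _ hj
            simp only [Finset.mem_range, not_lt] at hj
            rw [Nat.choose_eq_zero_of_lt (by omega)]
            simp
        have hx2 : (starRingEnd ℂ (x + y)) ^ (q - k) = ∑ j₂ ∈ Finset.range (q + 1),
            (((q - k).choose j₂ : ℂ)) * (starRingEnd ℂ x) ^ j₂ *
              (starRingEnd ℂ y) ^ (q - k - j₂) := by
          rw [map_add, add_pow]
          rw [Finset.sum_subset (Finset.range_subset_range.2 (show q - k + 1 ≤ q + 1 by omega))]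
          · exact Finset.sum_congr rfl fun j _ => by ring
          · intro j _ hj
            simp only [Finset.mem_range, not_lt] at hj
            rw [Nat.choose_eq_zero_of_lt (by omega)]
            simp
        rw [hx1, hx2, mul_assoc, Finset.sum_mul_sum]
        simp only [Finset.mul_sum]
        refine Finset.sum_congr rfl fun j₁ _ => Finset.sum_congr rfl fun j₂ _ => by ring
    _ = ∑ j₁ ∈ Finset.range (p + 1), ∑ j₂ ∈ Finset.range (q + 1), ∑ k ∈ Finset.range (q + 1),
          (-1 : ℂ) ^ k * (k.factorial : ℂ) * (p.choose k : ℂ) * (q.choose k : ℂ) * (σ : ℂ) ^ k *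
          ((p - k).choose j₁ : ℂ) * ((q - k).choose j₂ : ℂ) *
          x ^ j₁ * y ^ (p - k - j₁) * (starRingEnd ℂ x) ^ j₂ *
          (starRingEnd ℂ y) ^ (q - k - j₂) := by
        rw [Finset.sum_comm]
        exact Finset.sum_congr rfl fun j₁ _ => Finset.sum_comm
    _ = _ := by
        refine Finset.sum_congr rfl fun j₁ _ => Finset.sum_congr rfl fun j₂ hj₂ => ?_
        simp only [Finset.mem_range] at hj₂
        rw [Hext (p - j₁) (q - j₂) σ y (q + 1) (by omega), Finset.mul_sum, Finset.sum_mul,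
          Finset.sum_mul]
        refine Finset.sum_congr rfl fun k _ => ?_
        rw [key k j₁ j₂]
        unfold Hterm
        ring

lemma PcoefH (m j₁ j₂ : ℕ) (σ : ℝ) (y : ℂ) (h₁ : j₁ ≤ m + 1) (h₂ : j₂ ≤ m) :
    Hpq (m + 1 - j₁) (m - j₂) σ y = Pcoef m σ j₁ j₂ y := by
  unfold Pcoef
  by_cases h : j₁ ≤ j₂ + 1
  · rw [if_pos h]
    rw [show m + 1 - j₁ = (m - j₂) + (j₂ + 1 - j₁) by omega, HpqLag]
  · rw [if_neg h]
    rw [Hconj, show m - j₂ = (m + 1 - j₁) + (j₁ - j₂ - 1) by omega, HpqLag]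
    simp only [map_mul, map_pow, map_neg, map_one, Complex.conj_ofReal, map_natCast]

theorem statement_0 (m : ℕ) (hm : 1 ≤ m) (σ : ℝ) (x y : ℂ) :
    (-1 : ℂ) ^ m * (m.factorial : ℂ) *
        ((scaledLaguerre m 1 σ (‖x + y‖ ^ 2) : ℝ) : ℂ) * (x + y)
      = ∑ j₁ ∈ Finset.range (m + 2), ∑ j₂ ∈ Finset.range (m + 1),
          ((m + 1).choose j₁ : ℂ) * (m.choose j₂ : ℂ) * Pcoef m σ j₁ j₂ y *
            x ^ j₁ * (starRingEnd ℂ x) ^ j₂ := by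
  have hL : Hpq (m + 1) m σ (x + y)
      = (-1 : ℂ) ^ m * (m.factorial : ℂ) *
        ((scaledLaguerre m 1 σ (‖x + y‖ ^ 2) : ℝ) : ℂ) * (x + y) := by
    rw [HpqLag m 1 σ (x + y), pow_one]
  rw [← hL, Hbinom]
  refine Finset.sum_congr rfl fun j₁ hj₁ => Finset.sum_congr rfl fun j₂ hj₂ => ?_
  simp only [Finset.mem_range] at hj₁ hj₂
  rw [PcoefH m j₁ j₂ σ y (by omega) (by omega)]
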